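/- Let n ≥ 1 and let z₁, …, z_{2n} be pairwise distinct complex numbers. Let M be the 2n × 2n antisymmetric matrix with M_{ii} = 0 and M_{ij} = 1/(z_i − z_j) for i ≠ j. Then det M = Σ_{matchings} ∏_{pairs {i,j} in the matching} 1/(z_i − z_j)², where the sum ranges over all perfect matchings of {1, …, 2n} into n unordered pairs. -/

import Mathlib

open Finset

namespace BosonizationAux

open Equiv

variable {N : ℕ}

/-- Permutations that fix the complement of `s` pointwise and are
fixed-point-free on `s`. -/
def FF (s : Finset (Fin N)) : Finset (Equiv.Perm (Fin N)) :=
  Finset.univ.filter (fun σ => (∀ i ∉ s, σ i = i) ∧ ∀ i ∈ s, σ i ≠ i)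

lemma mem_FF {s : Finset (Fin N)} {σ : Equiv.Perm (Fin N)} :
    σ ∈ FF s ↔ (∀ i ∉ s, σ i = i) ∧ ∀ i ∈ s, σ i ≠ i := by
  simp [FF]

lemma FF_maps {s : Finset (Fin N)} {σ : Equiv.Perm (Fin N)} (hσ : σ ∈ FF s)
    {a : Fin N} (ha : a ∈ s) : σ a ∈ s := by
  rw [mem_FF] at hσ
  by_contra h
  exact hσ.2 a ha (σ.injective (hσ.1 _ h))

lemma FF_inv {s : Finset (Fin N)} {σ : Equiv.Perm (Fin N)} (hσ : σ ∈ FF s) : σ⁻¹ ∈ FF s := by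
  rw [mem_FF] at hσ ⊢
  constructor
  · intro i hi
    rw [Equiv.Perm.inv_eq_iff_eq]
    exact (hσ.1 i hi).symm
  · intro i hi h
    exact hσ.2 i hi ((Equiv.Perm.inv_eq_iff_eq.1 h).symm)

lemma pf_key {a q m : ℂ} (h1 : a ≠ m) (h2 : q ≠ m) (h3 : a ≠ q) :
    (a - m)⁻¹ * (m - q)⁻¹ = ((a - m)⁻¹ - (q - m)⁻¹) * (a - q)⁻¹ := by
  have h1' : a - m ≠ 0 := sub_ne_zero.2 h1
  have h2' : q - m ≠ 0 := sub_ne_zero.2 h2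
  have h3' : a - q ≠ 0 := sub_ne_zero.2 h3
  have h4' : m - q ≠ 0 := sub_ne_zero.2 (Ne.symm h2)
  field_simp
  ring

lemma pf_key2 {x y : ℂ} (h : x ≠ y) : (x - y)⁻¹ * (y - x)⁻¹ = -(((x - y) ^ 2)⁻¹) := by
  have h' : x - y ≠ 0 := sub_ne_zero.2 h
  have h2 : y - x = -(x - y) := by ring
  rw [h2, inv_neg, sq, mul_inv]
  ring

/-- Forward map membership, "long cycle through `m`" case. -/
lemma B_fwd {s : Finset (Fin N)} {σ : Equiv.Perm (Fin N)} {m : Fin N}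
    (hσ : σ ∈ FF s) (hms : m ∈ s) (hnm : σ (σ m) ≠ m) :
    Equiv.swap m (σ m) * σ ∈ FF (s.erase m) := by
  have hσF := mem_FF.1 hσ
  have hp : σ m ∈ s := FF_maps hσ hms
  rw [mem_FF]
  constructor
  · intro i hi
    rcases eq_or_ne i m with rfl | him
    · rw [Equiv.Perm.mul_apply, Equiv.swap_apply_right]
    · have his : i ∉ s := fun h => hi (Finset.mem_erase.2 ⟨him, h⟩)
      have hip : i ≠ σ m := fun h => his (h ▸ hp)
      rw [Equiv.Perm.mul_apply, hσF.1 i his, Equiv.swap_apply_of_ne_of_ne him hip]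
  · intro i hi
    have him : i ≠ m := Finset.ne_of_mem_erase hi
    have his : i ∈ s := Finset.mem_of_mem_erase hi
    rw [Equiv.Perm.mul_apply]
    rcases eq_or_ne (σ i) m with he | he
    · rw [he, Equiv.swap_apply_left]
      intro h
      exact hnm (by rw [h]; exact he)
    · have he2 : σ i ≠ σ m := fun h => him (σ.injective h)
      rw [Equiv.swap_apply_of_ne_of_ne he he2]
      exact hσF.2 i his

/-- Backward map membership, "long cycle through `m`" case. -/
lemma B_bwd {s : Finset (Fin N)} {σ' : Equiv.Perm (Fin N)} {m a : Fin N}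
    (hσ' : σ' ∈ FF (s.erase m)) (hms : m ∈ s) (ha : a ∈ s.erase m) :
    Equiv.swap m a * σ' ∈ FF s ∧
      (Equiv.swap m a * σ') ((Equiv.swap m a * σ') m) ≠ m := by
  have hσ'F := mem_FF.1 hσ'
  have ham : a ≠ m := Finset.ne_of_mem_erase ha
  have has : a ∈ s := Finset.mem_of_mem_erase ha
  have hσ'm : σ' m = m := hσ'F.1 m (Finset.notMem_erase m s)
  have hτm : (Equiv.swap m a * σ') m = a := by
    rw [Equiv.Perm.mul_apply, hσ'm, Equiv.swap_apply_left]
  refine ⟨mem_FF.2 ⟨?_, ?_⟩, ?_⟩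
  · intro i hi
    have him : i ≠ m := fun h => hi (h ▸ hms)
    have hia : i ≠ a := fun h => hi (h ▸ has)
    have hfix : σ' i = i := hσ'F.1 i (fun h => hi (Finset.mem_of_mem_erase h))
    rw [Equiv.Perm.mul_apply, hfix, Equiv.swap_apply_of_ne_of_ne him hia]
  · intro i hi
    rcases eq_or_ne i m with rfl | him
    · rw [hτm]; exact ham
    · have hie : i ∈ s.erase m := Finset.mem_erase.2 ⟨him, hi⟩
      have hσi : σ' i ∈ s.erase m := FF_maps hσ' hie
      have h1 : σ' i ≠ m := Finset.ne_of_mem_erase hσi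
      rw [Equiv.Perm.mul_apply]
      rcases eq_or_ne (σ' i) a with he | he
      · rw [he, Equiv.swap_apply_right]; exact him.symm
      · rw [Equiv.swap_apply_of_ne_of_ne h1 he]
        exact hσ'F.2 i hie
  · rw [hτm, Equiv.Perm.mul_apply]
    have hσa : σ' a ∈ s.erase m := FF_maps hσ' ha
    have h1 : σ' a ≠ m := Finset.ne_of_mem_erase hσa
    have h2 : σ' a ≠ a := hσ'F.2 a ha
    rw [Equiv.swap_apply_of_ne_of_ne h1 h2]
    exact h1

/-- Forward map membership, "2-cycle through `m`" case. -/
lemma C_fwd {s : Finset (Fin N)} {σ : Equiv.Perm (Fin N)} {m : Fin N}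
    (hσ : σ ∈ FF s) (hms : m ∈ s) (hinv : σ (σ m) = m) :
    Equiv.swap m (σ m) * σ ∈ FF ((s.erase m).erase (σ m)) := by
  have hσF := mem_FF.1 hσ
  rw [mem_FF]
  constructor
  · intro i hi
    rcases eq_or_ne i m with rfl | him
    · rw [Equiv.Perm.mul_apply, Equiv.swap_apply_right]
    rcases eq_or_ne i (σ m) with rfl | hip
    · rw [Equiv.Perm.mul_apply, hinv, Equiv.swap_apply_left]
    · have his : i ∉ s := fun h =>
        hi (Finset.mem_erase.2 ⟨hip, Finset.mem_erase.2 ⟨him, h⟩⟩)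
      rw [Equiv.Perm.mul_apply, hσF.1 i his, Equiv.swap_apply_of_ne_of_ne him hip]
  · intro i hi
    have hip : i ≠ σ m := Finset.ne_of_mem_erase hi
    have him : i ≠ m := Finset.ne_of_mem_erase (Finset.mem_of_mem_erase hi)
    have his : i ∈ s := Finset.mem_of_mem_erase (Finset.mem_of_mem_erase hi)
    have he1 : σ i ≠ m := fun h => hip (σ.injective (h.trans hinv.symm))
    have he2 : σ i ≠ σ m := fun h => him (σ.injective h)
    rw [Equiv.Perm.mul_apply, Equiv.swap_apply_of_ne_of_ne he1 he2]
    exact hσF.2 i his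

/-- Backward map membership, "2-cycle through `m`" case. -/
lemma C_bwd {s : Finset (Fin N)} {σ'' : Equiv.Perm (Fin N)} {m p : Fin N}
    (hσ'' : σ'' ∈ FF ((s.erase m).erase p)) (hms : m ∈ s) (hp : p ∈ s.erase m) :
    Equiv.swap m p * σ'' ∈ FF s ∧ (Equiv.swap m p * σ'') m = p ∧
      (Equiv.swap m p * σ'') p = m := by
  have hσF := mem_FF.1 hσ''
  have hpm : p ≠ m := Finset.ne_of_mem_erase hp
  have hps : p ∈ s := Finset.mem_of_mem_erase hp
  have hfm : σ'' m = m := hσF.1 m (by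
    intro h; exact (Finset.ne_of_mem_erase (Finset.mem_of_mem_erase h)) rfl)
  have hfp : σ'' p = p := hσF.1 p (by
    intro h; exact (Finset.ne_of_mem_erase h) rfl)
  have hτm : (Equiv.swap m p * σ'') m = p := by
    rw [Equiv.Perm.mul_apply, hfm, Equiv.swap_apply_left]
  have hτp : (Equiv.swap m p * σ'') p = m := by
    rw [Equiv.Perm.mul_apply, hfp, Equiv.swap_apply_right]
  refine ⟨mem_FF.2 ⟨?_, ?_⟩, hτm, hτp⟩
  · intro i hi
    have him : i ≠ m := fun h => hi (h ▸ hms)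
    have hip : i ≠ p := fun h => hi (h ▸ hps)
    have hfix : σ'' i = i := hσF.1 i (fun h =>
      hi (Finset.mem_of_mem_erase (Finset.mem_of_mem_erase h)))
    rw [Equiv.Perm.mul_apply, hfix, Equiv.swap_apply_of_ne_of_ne him hip]
  · intro i hi
    rcases eq_or_ne i m with rfl | him
    · rw [hτm]; exact hpm
    rcases eq_or_ne i p with rfl | hip
    · rw [hτp]; exact Ne.symm him
    · have hie : i ∈ (s.erase m).erase p :=
        Finset.mem_erase.2 ⟨hip, Finset.mem_erase.2 ⟨him, hi⟩⟩
      have hσi : σ'' i ∈ (s.erase m).erase p := FF_maps hσ'' hie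
      have h1 : σ'' i ≠ m := Finset.ne_of_mem_erase (Finset.mem_of_mem_erase hσi)
      have h2 : σ'' i ≠ p := Finset.ne_of_mem_erase hσi
      rw [Equiv.Perm.mul_apply, Equiv.swap_apply_of_ne_of_ne h1 h2]
      exact hσF.2 i hie

lemma sign_cast_mul_swap {m a : Fin N} (σ : Equiv.Perm (Fin N)) (h : a ≠ m) :
    ((Equiv.Perm.sign (Equiv.swap m a * σ) : ℤ) : ℂ)
      = -((Equiv.Perm.sign σ : ℤ) : ℂ) := by
  rw [Equiv.Perm.sign_mul, Equiv.Perm.sign_swap (Ne.symm h)]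
  push_cast
  ring

/-- If `σ''` fixes `m` and `p`, squaring commutes with multiplying by `swap m p`. -/
lemma invol_transfer {σ'' : Equiv.Perm (Fin N)} {m p : Fin N}
    (hfm : σ'' m = m) (hfp : σ'' p = p) :
    (Equiv.swap m p * σ'') * (Equiv.swap m p * σ'') = σ'' * σ'' := by
  have hd : (Equiv.swap m p).Disjoint σ'' := by
    intro x
    rcases eq_or_ne x m with rfl | hxm
    · exact Or.inr hfm
    rcases eq_or_ne x p with rfl | hxp
    · exact Or.inr hfp
    · exact Or.inl (Equiv.swap_apply_of_ne_of_ne hxm hxp)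
  have hc : Commute (Equiv.swap m p) σ'' := hd.commute
  calc (Equiv.swap m p * σ'') * (Equiv.swap m p * σ'')
      = Equiv.swap m p * (σ'' * Equiv.swap m p) * σ'' := by group
    _ = Equiv.swap m p * (Equiv.swap m p * σ'') * σ'' := by rw [← hc.eq]
    _ = (Equiv.swap m p * Equiv.swap m p) * (σ'' * σ'') := by group
    _ = σ'' * σ'' := by rw [Equiv.swap_mul_self, one_mul]

/-- The main induction: for any `s`, the signed sum over fixed-point-free
permutations of `s` equals the matching sum. -/
lemma key (z : Fin N → ℂ) (M : Matrix (Fin N) (Fin N) ℂ) (hz : Function.Injective z)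
    (hM : ∀ i j, M i j = if i = j then 0 else (z i - z j)⁻¹)
    (s : Finset (Fin N)) :
    ∑ σ ∈ FF s, ((Equiv.Perm.sign σ : ℤ) : ℂ) * ∏ i ∈ s, M (σ i) i
      = ∑ σ ∈ (FF s).filter (fun σ => σ * σ = 1),
          ∏ i ∈ Finset.univ.filter (fun i => i < σ i), ((z i - z (σ i)) ^ 2)⁻¹ := by
  have hzz : ∀ {i j : Fin N}, i ≠ j → z i ≠ z j := fun h e => h (hz e)
  have hMne : ∀ {i j : Fin N}, i ≠ j → M i j = (z i - z j)⁻¹ := by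
    intro i j h; rw [hM]; simp [h]
  induction s using Finset.strongInduction with
  | _ s IH => ?_
  rcases s.eq_empty_or_nonempty with rfl | hs
  · have h1 : FF (∅ : Finset (Fin N)) = {1} := by
      ext σ
      simp only [mem_FF, Finset.notMem_empty, Finset.mem_singleton]
      constructor
      · rintro ⟨h, -⟩
        exact Equiv.ext fun i => h i (fun h' => h')
      · rintro rfl
        exact ⟨fun i _ => rfl, fun i hi => absurd hi (fun h' => h')⟩
    rw [h1, Finset.filter_singleton]
    simp
  -- nonempty case
  have hms : s.max' hs ∈ s := s.max'_mem hs
  set m := s.max' hs with hm_def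
  have hlt : ∀ p ∈ s.erase m, p < m := fun p hp =>
    lt_of_le_of_ne (s.le_max' p (Finset.mem_of_mem_erase hp)) (Finset.ne_of_mem_erase hp)
  have hsub : ∀ p ∈ s.erase m, ((s.erase m).erase p) ⊂ s := fun p hp =>
    Finset.ssubset_of_subset_of_ssubset (Finset.erase_subset _ _) (Finset.erase_ssubset hms)
  rw [← Finset.sum_filter_add_sum_filter_not (FF s) (fun σ => σ (σ m) = m)
      (fun σ => ((Equiv.Perm.sign σ : ℤ) : ℂ) * ∏ i ∈ s, M (σ i) i)]
  -- Part B : terms where m lies in a cycle of length ≥ 3 cancel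
  have hvanish : ∑ σ ∈ (FF s).filter (fun σ => ¬σ (σ m) = m),
      ((Equiv.Perm.sign σ : ℤ) : ℂ) * ∏ i ∈ s, M (σ i) i = 0 := by
    have hbij : ∑ σ ∈ (FF s).filter (fun σ => ¬σ (σ m) = m),
        ((Equiv.Perm.sign σ : ℤ) : ℂ) * ∏ i ∈ s, M (σ i) i
        = ∑ x ∈ (FF (s.erase m)) ×ˢ (s.erase m),
            ((Equiv.Perm.sign (Equiv.swap m x.2 * x.1) : ℤ) : ℂ)
              * ∏ i ∈ s, M ((Equiv.swap m x.2 * x.1) i) i := by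
      refine Finset.sum_nbij' (fun σ => (Equiv.swap m (σ m) * σ, σ m))
        (fun x => Equiv.swap m x.2 * x.1) ?_ ?_ ?_ ?_ ?_
      · intro σ hσ
        rw [Finset.mem_filter] at hσ
        rw [Finset.mem_product]
        exact ⟨B_fwd hσ.1 hms hσ.2, Finset.mem_erase.2
          ⟨(mem_FF.1 hσ.1).2 m hms, FF_maps hσ.1 hms⟩⟩
      · rintro ⟨σ', a⟩ hx
        rw [Finset.mem_product] at hx
        obtain ⟨hB1, hB2⟩ := B_bwd hx.1 hms hx.2
        rw [Finset.mem_filter]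
        exact ⟨hB1, hB2⟩
      · intro σ hσ
        simp only
        exact Equiv.swap_mul_self_mul m (σ m) σ
      · rintro ⟨σ', a⟩ hx
        rw [Finset.mem_product] at hx
        have hσ'm : σ' m = m := (mem_FF.1 hx.1).1 m (Finset.notMem_erase m s)
        have hτm : (Equiv.swap m a * σ') m = a := by
          rw [Equiv.Perm.mul_apply, hσ'm, Equiv.swap_apply_left]
        simp only [hτm, Equiv.swap_mul_self_mul]
      · intro σ hσ
        simp only [Equiv.swap_mul_self_mul]
    rw [hbij, Finset.sum_product]
    refine Finset.sum_eq_zero fun σ' hσ' => ?_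
    have hσ'F := mem_FF.1 hσ'
    have hσ'm : σ' m = m := hσ'F.1 m (Finset.notMem_erase m s)
    have hterm : ∀ a ∈ s.erase m,
        ((Equiv.Perm.sign (Equiv.swap m a * σ') : ℤ) : ℂ)
            * ∏ i ∈ s, M ((Equiv.swap m a * σ') i) i
          = (-((Equiv.Perm.sign σ' : ℤ) : ℂ) * ∏ i ∈ s.erase m, M (σ' i) i)
            * ((z a - z m)⁻¹ - (z (σ'⁻¹ a) - z m)⁻¹) := by
      intro a ha
      have ham : a ≠ m := Finset.ne_of_mem_erase ha
      have hq : σ'⁻¹ a ∈ s.erase m := FF_maps (FF_inv hσ') ha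
      have hqm : σ'⁻¹ a ≠ m := Finset.ne_of_mem_erase hq
      have hσq : σ' (σ'⁻¹ a) = a := Equiv.apply_symm_apply σ' a
      have hqa : σ'⁻¹ a ≠ a := fun h => hσ'F.2 a ha (by
        have h2 := congrArg σ' h
        rw [hσq] at h2
        exact h2.symm)
      have hτm : (Equiv.swap m a * σ') m = a := by
        rw [Equiv.Perm.mul_apply, hσ'm, Equiv.swap_apply_left]
      have hτq : (Equiv.swap m a * σ') (σ'⁻¹ a) = m := by
        rw [Equiv.Perm.mul_apply, hσq, Equiv.swap_apply_right]
      rw [sign_cast_mul_swap σ' ham]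
      rw [← Finset.mul_prod_erase s _ hms, hτm]
      rw [← Finset.mul_prod_erase (s.erase m)
        (fun i => M ((Equiv.swap m a * σ') i) i) hq, hτq]
      rw [← Finset.mul_prod_erase (s.erase m) (fun i => M (σ' i) i) hq, hσq]
      have hrest : ∏ i ∈ (s.erase m).erase (σ'⁻¹ a), M ((Equiv.swap m a * σ') i) i
          = ∏ i ∈ (s.erase m).erase (σ'⁻¹ a), M (σ' i) i := by
        refine Finset.prod_congr rfl fun i hi => ?_
        have hiq : i ≠ σ'⁻¹ a := Finset.ne_of_mem_erase hi
        have hie : i ∈ s.erase m := Finset.mem_of_mem_erase hi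
        have h1 : σ' i ≠ m := Finset.ne_of_mem_erase (FF_maps hσ' hie)
        have h2 : σ' i ≠ a := fun h => hiq (by rw [← h]; exact (Equiv.symm_apply_apply σ' i).symm)
        rw [Equiv.Perm.mul_apply, Equiv.swap_apply_of_ne_of_ne h1 h2]
      rw [hrest]
      rw [hMne ham, hMne (Ne.symm hqm), hMne (Ne.symm hqa)]
      have hk := pf_key (hzz ham) (hzz hqm) (hzz (Ne.symm hqa))
      linear_combination (-(((Equiv.Perm.sign σ' : ℤ) : ℂ))
        * (∏ i ∈ (s.erase m).erase (σ'⁻¹ a), M (σ' i) i)) * hk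
    rw [Finset.sum_congr rfl hterm, ← Finset.mul_sum]
    have hsum0 : ∑ a ∈ s.erase m, ((z a - z m)⁻¹ - (z (σ'⁻¹ a) - z m)⁻¹) = 0 := by
      rw [Finset.sum_sub_distrib]
      have hcomp : ∑ a ∈ s.erase m, (z (σ'⁻¹ a) - z m)⁻¹
          = ∑ a ∈ s.erase m, (z a - z m)⁻¹ := by
        refine Equiv.Perm.sum_comp σ'⁻¹ (s.erase m) (fun x => (z x - z m)⁻¹) ?_
        intro x hx
        simp only [Set.mem_setOf_eq] at hx
        by_contra h
        apply hx
        rw [Equiv.Perm.inv_eq_iff_eq]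
        exact (hσ'F.1 x (fun hmem => h (Finset.mem_coe.2 hmem))).symm
      rw [hcomp, sub_self]
    rw [hsum0, mul_zero]
  rw [hvanish, add_zero]
  -- Part C : 2-cycle terms give the recursion
  have hC : ∑ σ ∈ (FF s).filter (fun σ => σ (σ m) = m),
      ((Equiv.Perm.sign σ : ℤ) : ℂ) * ∏ i ∈ s, M (σ i) i
      = ∑ p ∈ s.erase m, ((z p - z m) ^ 2)⁻¹ *
          ∑ σ'' ∈ FF ((s.erase m).erase p),
            ((Equiv.Perm.sign σ'' : ℤ) : ℂ) * ∏ i ∈ (s.erase m).erase p, M (σ'' i) i := by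
    have hbij : ∑ σ ∈ (FF s).filter (fun σ => σ (σ m) = m),
        ((Equiv.Perm.sign σ : ℤ) : ℂ) * ∏ i ∈ s, M (σ i) i
        = ∑ x ∈ (s.erase m).sigma (fun p => FF ((s.erase m).erase p)),
            ((Equiv.Perm.sign (Equiv.swap m x.1 * x.2) : ℤ) : ℂ)
              * ∏ i ∈ s, M ((Equiv.swap m x.1 * x.2) i) i := by
      refine Finset.sum_nbij' (fun σ => ⟨σ m, Equiv.swap m (σ m) * σ⟩)
        (fun x => Equiv.swap m x.1 * x.2) ?_ ?_ ?_ ?_ ?_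
      · intro σ hσ
        rw [Finset.mem_filter] at hσ
        rw [Finset.mem_sigma]
        exact ⟨Finset.mem_erase.2 ⟨(mem_FF.1 hσ.1).2 m hms, FF_maps hσ.1 hms⟩,
          C_fwd hσ.1 hms hσ.2⟩
      · rintro ⟨p, σ''⟩ hx
        rw [Finset.mem_sigma] at hx
        obtain ⟨h1, h2, h3⟩ := C_bwd hx.2 hms hx.1
        rw [Finset.mem_filter]
        exact ⟨h1, by rw [h2, h3]⟩
      · intro σ hσ
        simp only
        exact Equiv.swap_mul_self_mul m (σ m) σ
      · rintro ⟨p, σ''⟩ hx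
        rw [Finset.mem_sigma] at hx
        obtain ⟨h1, h2, h3⟩ := C_bwd hx.2 hms hx.1
        simp only [h2, Equiv.swap_mul_self_mul]
      · intro σ hσ
        simp only [Equiv.swap_mul_self_mul]
    rw [hbij, Finset.sum_sigma]
    refine Finset.sum_congr rfl fun p hp => ?_
    rw [Finset.mul_sum]
    refine Finset.sum_congr rfl fun σ'' hσ'' => ?_
    obtain ⟨h1, h2, h3⟩ := C_bwd hσ'' hms hp
    have hpm : p ≠ m := Finset.ne_of_mem_erase hp
    rw [sign_cast_mul_swap σ'' hpm]
    rw [← Finset.mul_prod_erase s _ hms, h2]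
    rw [← Finset.mul_prod_erase (s.erase m)
      (fun i => M ((Equiv.swap m p * σ'') i) i) hp, h3]
    have hrest : ∏ i ∈ (s.erase m).erase p, M ((Equiv.swap m p * σ'') i) i
        = ∏ i ∈ (s.erase m).erase p, M (σ'' i) i := by
      refine Finset.prod_congr rfl fun i hi => ?_
      have hσi := FF_maps hσ'' hi
      have hA : σ'' i ≠ m := Finset.ne_of_mem_erase (Finset.mem_of_mem_erase hσi)
      have hB : σ'' i ≠ p := Finset.ne_of_mem_erase hσi
      rw [Equiv.Perm.mul_apply, Equiv.swap_apply_of_ne_of_ne hA hB]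
    rw [hrest, hMne hpm, hMne (Ne.symm hpm)]
    have hk := pf_key2 (hzz hpm)
    linear_combination (-(((Equiv.Perm.sign σ'' : ℤ) : ℂ))
      * (∏ i ∈ (s.erase m).erase p, M (σ'' i) i)) * hk
  -- Part D : the matching sum satisfies the same recursion
  have hD : ∑ σ ∈ (FF s).filter (fun σ => σ * σ = 1),
      ∏ i ∈ Finset.univ.filter (fun i => i < σ i), ((z i - z (σ i)) ^ 2)⁻¹
      = ∑ p ∈ s.erase m, ((z p - z m) ^ 2)⁻¹ *
          ∑ σ'' ∈ (FF ((s.erase m).erase p)).filter (fun σ => σ * σ = 1),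
            ∏ i ∈ Finset.univ.filter (fun i => i < σ'' i), ((z i - z (σ'' i)) ^ 2)⁻¹ := by
    have hbij : ∑ σ ∈ (FF s).filter (fun σ => σ * σ = 1),
        ∏ i ∈ Finset.univ.filter (fun i => i < σ i), ((z i - z (σ i)) ^ 2)⁻¹
        = ∑ x ∈ (s.erase m).sigma
            (fun p => (FF ((s.erase m).erase p)).filter (fun σ => σ * σ = 1)),
            ∏ i ∈ Finset.univ.filter (fun i => i < (Equiv.swap m x.1 * x.2) i),
              ((z i - z ((Equiv.swap m x.1 * x.2) i)) ^ 2)⁻¹ := by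
      refine Finset.sum_nbij' (fun σ => ⟨σ m, Equiv.swap m (σ m) * σ⟩)
        (fun x => Equiv.swap m x.1 * x.2) ?_ ?_ ?_ ?_ ?_
      · intro σ hσ
        rw [Finset.mem_filter] at hσ
        have hinv_pt : σ (σ m) = m := by
          rw [← Equiv.Perm.mul_apply, hσ.2, Equiv.Perm.one_apply]
        have hCf := C_fwd hσ.1 hms hinv_pt
        have hfm : (Equiv.swap m (σ m) * σ) m = m := (mem_FF.1 hCf).1 m (by
          intro h; exact Finset.ne_of_mem_erase (Finset.mem_of_mem_erase h) rfl)
        have hfp : (Equiv.swap m (σ m) * σ) (σ m) = σ m := (mem_FF.1 hCf).1 (σ m) (by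
          intro h; exact Finset.ne_of_mem_erase h rfl)
        rw [Finset.mem_sigma]
        refine ⟨Finset.mem_erase.2 ⟨(mem_FF.1 hσ.1).2 m hms, FF_maps hσ.1 hms⟩,
          Finset.mem_filter.2 ⟨hCf, ?_⟩⟩
        have ht := invol_transfer hfm hfp
        rw [Equiv.swap_mul_self_mul] at ht
        rw [← ht]
        exact hσ.2
      · rintro ⟨p, σ''⟩ hx
        rw [Finset.mem_sigma] at hx
        obtain ⟨hp2, hσx⟩ := hx
        rw [Finset.mem_filter] at hσx
        obtain ⟨h1, h2, h3⟩ := C_bwd hσx.1 hms hp2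
        have hfm : σ'' m = m := (mem_FF.1 hσx.1).1 m (by
          intro h; exact Finset.ne_of_mem_erase (Finset.mem_of_mem_erase h) rfl)
        have hfp : σ'' p = p := (mem_FF.1 hσx.1).1 p (by
          intro h; exact Finset.ne_of_mem_erase h rfl)
        rw [Finset.mem_filter]
        refine ⟨h1, ?_⟩
        rw [invol_transfer hfm hfp]
        exact hσx.2
      · intro σ hσ
        simp only
        exact Equiv.swap_mul_self_mul m (σ m) σ
      · rintro ⟨p, σ''⟩ hx
        rw [Finset.mem_sigma] at hx
        obtain ⟨hp2, hσx⟩ := hx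
        rw [Finset.mem_filter] at hσx
        obtain ⟨h1, h2, h3⟩ := C_bwd hσx.1 hms hp2
        simp only [h2, Equiv.swap_mul_self_mul]
      · intro σ hσ
        simp only [Equiv.swap_mul_self_mul]
    rw [hbij, Finset.sum_sigma]
    refine Finset.sum_congr rfl fun p hp => ?_
    rw [Finset.mul_sum]
    refine Finset.sum_congr rfl fun σ'' hσx => ?_
    rw [Finset.mem_filter] at hσx
    obtain ⟨h1, h2, h3⟩ := C_bwd hσx.1 hms hp
    have hpm : p ≠ m := Finset.ne_of_mem_erase hp
    have hplt : p < m := hlt p hp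
    have hfm : σ'' m = m := (mem_FF.1 hσx.1).1 m (by
      intro h; exact Finset.ne_of_mem_erase (Finset.mem_of_mem_erase h) rfl)
    have hfp : σ'' p = p := (mem_FF.1 hσx.1).1 p (by
      intro h; exact Finset.ne_of_mem_erase h rfl)
    have hfilter : Finset.univ.filter (fun i => i < (Equiv.swap m p * σ'') i)
        = insert p (Finset.univ.filter (fun i => i < σ'' i)) := by
      ext i
      simp only [Finset.mem_filter, Finset.mem_univ, true_and, Finset.mem_insert]
      rcases eq_or_ne i m with rfl | him
      · rw [h2]
        constructor
        · intro h; exact absurd h (not_lt.2 hplt.le)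
        · rintro (rfl | h)
          · exact absurd rfl hpm
          · rw [hfm] at h; exact absurd h (lt_irrefl m)
      rcases eq_or_ne i p with rfl | hip
      · rw [h3, hfp]
        simp [hplt]
      · have hAm : σ'' i ≠ m := fun h => him (σ''.injective (h.trans hfm.symm))
        have hAp : σ'' i ≠ p := fun h => hip (σ''.injective (h.trans hfp.symm))
        rw [Equiv.Perm.mul_apply, Equiv.swap_apply_of_ne_of_ne hAm hAp]
        simp [hip]
    have hpnot : p ∉ Finset.univ.filter (fun i => i < σ'' i) := by
      simp [hfp]
    rw [hfilter, Finset.prod_insert hpnot, h3]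
    congr 1
    refine Finset.prod_congr rfl fun i hi => ?_
    rw [Finset.mem_filter] at hi
    have him : i ≠ m := fun h => by rw [h, hfm] at hi; exact lt_irrefl m hi.2
    have hip : i ≠ p := fun h => by rw [h, hfp] at hi; exact lt_irrefl p hi.2
    have hAm : σ'' i ≠ m := fun h => him (σ''.injective (h.trans hfm.symm))
    have hAp : σ'' i ≠ p := fun h => hip (σ''.injective (h.trans hfp.symm))
    rw [Equiv.Perm.mul_apply, Equiv.swap_apply_of_ne_of_ne hAm hAp]
  rw [hC, hD]
  refine Finset.sum_congr rfl fun p hp => ?_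
  rw [IH _ (hsub p hp)]

end BosonizationAux

/-- **Bosonization identity `Pf(M)² = det M` as a sum over perfect matchings.**
For pairwise distinct `z₁, …, z_{2n}` and `M` the antisymmetric matrix with entries
`M_{ij} = 1/(z_i - z_j)` off the diagonal, `det M` equals the sum over all perfect
matchings of `{1, …, 2n}` (encoded as fixed-point-free involutions `σ`, each unordered
pair `{i, σ i}` contributing once via its smaller element) of the product over the
pairs of `1/(z_i - z_j)²`. -/
theorem det_eq_sum_over_perfect_matchings (n : ℕ) (hn : 1 ≤ n)
    (z : Fin (2 * n) → ℂ) (hz : Function.Injective z)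
    (M : Matrix (Fin (2 * n)) (Fin (2 * n)) ℂ)
    (hM : ∀ i j, M i j = if i = j then 0 else (z i - z j)⁻¹) :
    M.det =
      ∑ σ ∈ Finset.univ.filter
          (fun σ : Equiv.Perm (Fin (2 * n)) => σ * σ = 1 ∧ ∀ i, σ i ≠ i),
        ∏ i ∈ Finset.univ.filter (fun i => i < σ i), ((z i - z (σ i)) ^ 2)⁻¹ := by
  classical
  have h1 : M.det = ∑ σ ∈ BosonizationAux.FF (Finset.univ : Finset (Fin (2 * n))),
      ((Equiv.Perm.sign σ : ℤ) : ℂ) * ∏ i ∈ Finset.univ, M (σ i) i := by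
    rw [Matrix.det_apply]
    rw [← Finset.sum_subset
      (Finset.subset_univ (BosonizationAux.FF (Finset.univ : Finset (Fin (2 * n)))))
      ?_]
    · refine Finset.sum_congr rfl fun σ _ => ?_
      rw [Units.smul_def, zsmul_eq_mul]
    · intro σ _ hσ
      rw [BosonizationAux.mem_FF] at hσ
      push_neg at hσ
      obtain ⟨i, -, hfix⟩ := hσ (fun i hi => absurd (Finset.mem_univ i) hi)
      have hz0 : M (σ i) i = 0 := by rw [hfix, hM]; simp
      have hz1 : ∏ j, M (σ j) j = 0 := Finset.prod_eq_zero (Finset.mem_univ i) hz0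
      rw [hz1, smul_zero]
  rw [h1, BosonizationAux.key z M hz hM]
  refine Finset.sum_congr ?_ fun _ _ => rfl
  ext σ
  simp only [Finset.mem_filter, BosonizationAux.mem_FF, Finset.mem_univ, true_and]
  constructor
  · rintro ⟨⟨-, h2⟩, h3⟩
    exact ⟨h3, fun i => h2 i trivial⟩
  · rintro ⟨h3, h2⟩
    exact ⟨⟨fun i hi => absurd trivial hi, fun i _ => h2 i⟩, h3⟩
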